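/- Let P be a positive homogeneous function with level set S and surface measure σ_P, and let E ∈ Exp(P). Given g : S → C, define f(x) = μ_P · χ_{(0,1)}(P(x)) g(P(x)^{-E} x) for x ≠ 0 and f(0) = 0. Then g is σ_P-integrable on S if and only if f is Lebesgue integrable on R^d, and in that case ∫_{R^d} f(x) dx = ∫_S g(η) σ_P(dη). -/

import Mathlib

open MeasureTheory Filter Set

/-- The continuous one-parameter group `T_r = r^E = exp((ln r) E)` generated by an
endomorphism `E` of `ℝ^d`. -/
noncomputable def Tgrp {d : ℕ} (E : EuclideanSpace ℝ (Fin d) →L[ℝ] EuclideanSpace ℝ (Fin d))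
    (r : ℝ) : EuclideanSpace ℝ (Fin d) →L[ℝ] EuclideanSpace ℝ (Fin d) :=
  NormedSpace.exp (Real.log r • E)

/-- The group `{T_r}` is contracting: `‖T_r‖ → 0` as `r → 0⁺` (operator norm). -/
def IsContracting {d : ℕ} (E : EuclideanSpace ℝ (Fin d) →L[ℝ] EuclideanSpace ℝ (Fin d)) : Prop :=
  Tendsto (fun r : ℝ => ‖Tgrp E r‖) (nhdsWithin 0 (Set.Ioi 0)) (nhds 0)


/-- `E` is an exponent of `P`: `P(r^E x) = r · P(x)` for all `r > 0` and `x ∈ ℝ^d`. -/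
def IsExpOf {d : ℕ} (P : EuclideanSpace ℝ (Fin d) → ℝ)
    (E : EuclideanSpace ℝ (Fin d) →L[ℝ] EuclideanSpace ℝ (Fin d)) : Prop :=
  ∀ r : ℝ, 0 < r → ∀ x : EuclideanSpace ℝ (Fin d), P (Tgrp E r x) = r * P x

/-- `P` is positive homogeneous: continuous, positive definite, possesses an exponent,
and `P(x) → ∞` as `|x| → ∞`. -/
def IsPosHom {d : ℕ} (P : EuclideanSpace ℝ (Fin d) → ℝ) : Prop :=
  Continuous P ∧ (∀ x, 0 ≤ P x) ∧ (∀ x, P x = 0 → x = 0) ∧ (∃ E, IsExpOf P E) ∧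
    Tendsto P (Filter.cocompact (EuclideanSpace ℝ (Fin d))) Filter.atTop

/-- For `F ⊆ ℝ^d`, the "contracted cone" `F̃ = { r^E η : 0 < r < 1, η ∈ F }`. -/
def Tilde {d : ℕ} (E : EuclideanSpace ℝ (Fin d) →L[ℝ] EuclideanSpace ℝ (Fin d))
    (F : Set (EuclideanSpace ℝ (Fin d))) : Set (EuclideanSpace ℝ (Fin d)) :=
  {x | ∃ r ∈ Set.Ioo (0:ℝ) 1, ∃ η ∈ F, Tgrp E r η = x}


/-- determinant as a continuous multilinear map in the rows -/
noncomputable def detCM (d : ℕ) : ContinuousMultilinearMap ℝ (fun _ : Fin d => (Fin d → ℝ)) ℝ :=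
  (Matrix.detRowAlternating (n := Fin d) (R := ℝ)).toMultilinearMap.mkContinuous
    (Nat.factorial d) (by
      intro m
      have h1 : (Matrix.detRowAlternating (n := Fin d) (R := ℝ)).toMultilinearMap m
          = ∑ σ : Equiv.Perm (Fin d), Equiv.Perm.sign σ • ∏ i, m (σ i) i :=
        Matrix.det_apply (Matrix.of m)
      rw [h1]
      calc ‖∑ σ : Equiv.Perm (Fin d), Equiv.Perm.sign σ • ∏ i, m (σ i) i‖
          ≤ ∑ σ : Equiv.Perm (Fin d), ‖Equiv.Perm.sign σ • ∏ i, m (σ i) i‖ :=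
            norm_sum_le _ _
        _ ≤ ∑ σ : Equiv.Perm (Fin d), ∏ i, ‖m i‖ := by
            refine Finset.sum_le_sum fun σ _ => ?_
            have h2 : ‖Equiv.Perm.sign σ • ∏ i, m (σ i) i‖ = ‖∏ i, m (σ i) i‖ := by
              rcases Int.units_eq_one_or (Equiv.Perm.sign σ) with h | h <;>
                simp [h, Units.smul_def]
            rw [h2]
            have h3 : ‖∏ i, m (σ i) i‖ ≤ ∏ i, ‖m (σ i) i‖ := Finset.norm_prod_le Finset.univ (fun i => m (σ i) i)
            refine h3.trans ?_
            have h4 : ∏ i, ‖m (σ i) i‖ ≤ ∏ i, ‖m (σ i)‖ := by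
              refine Finset.prod_le_prod (fun i _ => norm_nonneg _) fun i _ => ?_
              exact norm_le_pi_norm (m (σ i)) i
            refine h4.trans_eq ?_
            exact Equiv.prod_comp σ fun i => ‖m i‖
        _ = (Nat.factorial d) * ∏ i, ‖m i‖ := by
            rw [Finset.sum_const, Finset.card_univ, Fintype.card_perm, Fintype.card_fin,
              nsmul_eq_mul]
      )

lemma detCM_apply {d : ℕ} (m : Fin d → Fin d → ℝ) : detCM d m = Matrix.det (Matrix.of m) := rfl

lemma det_updateRow_one {d : ℕ} (i : Fin d) (v : Fin d → ℝ) :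
    ((1 : Matrix (Fin d) (Fin d) ℝ).updateRow i v).det = v i := by
  have h : (1 : Matrix (Fin d) (Fin d) ℝ).updateRow i v
      = ((1 : Matrix (Fin d) (Fin d) ℝ).updateCol i v).transpose := by
    rw [← Matrix.updateRow_transpose, Matrix.transpose_one]
  rw [h, Matrix.det_transpose, ← Matrix.cramer_apply, Matrix.cramer_one]
  rfl



section DetExp

set_option maxHeartbeats 1000000
set_option synthInstance.maxHeartbeats 200000

abbrev VS (d : ℕ) := EuclideanSpace ℝ (Fin d)

lemma exp_add_CLM {d : ℕ} {x y : VS d →L[ℝ] VS d} (h : Commute x y) :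
    NormedSpace.exp (x + y) = NormedSpace.exp x * NormedSpace.exp y :=
  NormedSpace.exp_add_of_commute_of_mem_ball (𝕂 := ℝ) h
    ((NormedSpace.expSeries_radius_eq_top ℝ (VS d →L[ℝ] VS d)).symm ▸ edist_lt_top _ _)
    ((NormedSpace.expSeries_radius_eq_top ℝ (VS d →L[ℝ] VS d)).symm ▸ edist_lt_top _ _)

lemma exp_continuous_CLM {d : ℕ} :
    Continuous (NormedSpace.exp : (VS d →L[ℝ] VS d) → (VS d →L[ℝ] VS d)) := by
  rw [← continuousOn_univ, ← Metric.eball_top_eq_univ (0 : VS d →L[ℝ] VS d),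
    ← NormedSpace.expSeries_radius_eq_top ℝ (VS d →L[ℝ] VS d)]
  exact NormedSpace.continuousOn_exp

/-- the basis -/
noncomputable def bV (d : ℕ) : Module.Basis (Fin d) ℝ (VS d) :=
  (EuclideanSpace.basisFun (Fin d) ℝ).toBasis

/-- conversion to a plain matrix-as-pi-type, as a linear map -/
noncomputable def toMat (d : ℕ) : (VS d →L[ℝ] VS d) →ₗ[ℝ] (Fin d → Fin d → ℝ) where
  toFun A := Matrix.of.symm (LinearMap.toMatrix (bV d) (bV d) (A : VS d →ₗ[ℝ] VS d))
  map_add' A B := by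
    have h : ((A + B : VS d →L[ℝ] VS d) : VS d →ₗ[ℝ] VS d)
        = (A : VS d →ₗ[ℝ] VS d) + (B : VS d →ₗ[ℝ] VS d) := rfl
    simp only [h, map_add]
    rfl
  map_smul' c A := by
    have h : ((c • A : VS d →L[ℝ] VS d) : VS d →ₗ[ℝ] VS d)
        = c • (A : VS d →ₗ[ℝ] VS d) := rfl
    simp only [h, LinearEquiv.map_smul]
    rfl

lemma coe_one_eq_id {d : ℕ} : ((1 : VS d →L[ℝ] VS d) : VS d →ₗ[ℝ] VS d) = LinearMap.id := rfl

lemma toMat_one {d : ℕ} :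
    toMat d (1 : VS d →L[ℝ] VS d) = Matrix.of.symm (1 : Matrix (Fin d) (Fin d) ℝ) := by
  simp only [toMat, LinearMap.coe_mk, AddHom.coe_mk, coe_one_eq_id, LinearMap.toMatrix_id]

/-- `D` : determinant of `exp (t • E)` -/
noncomputable def detExp {d : ℕ} (E : VS d →L[ℝ] VS d) (t : ℝ) : ℝ :=
  LinearMap.det ((NormedSpace.exp (t • E) : VS d →L[ℝ] VS d) : VS d →ₗ[ℝ] VS d)

lemma detExp_eq_detCM {d : ℕ} (E : VS d →L[ℝ] VS d) (t : ℝ) :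
    detExp E t = detCM d (toMat d (NormedSpace.exp (t • E))) := by
  rw [detCM_apply, detExp]
  simp only [toMat, LinearMap.coe_mk, AddHom.coe_mk, Equiv.apply_symm_apply]
  rw [LinearMap.det_toMatrix]

lemma detExp_hasDerivAt {d : ℕ} (E : VS d →L[ℝ] VS d) :
    HasDerivAt (detExp E) (LinearMap.trace ℝ (VS d) (E : VS d →ₗ[ℝ] VS d)) 0 := by
  classical
  have hexp : HasDerivAt (fun t : ℝ => NormedSpace.exp (t • E)) E 0 := by
    have := hasDerivAt_exp_smul_const (𝕂 := ℝ) E 0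
    have h0 : NormedSpace.exp ((0:ℝ) • E) * E = E := by
      rw [show (0:ℝ) • E = 0 from zero_smul ℝ E, NormedSpace.exp_zero, one_mul]
    rw [h0] at this
    exact this
  have hmat : HasDerivAt (fun t : ℝ => toMat d (NormedSpace.exp (t • E))) (toMat d E) 0 := by
    have hc : HasFDerivAt (toMat d) ((toMat d).toContinuousLinearMap : _ →L[ℝ] _)
        (NormedSpace.exp ((0:ℝ) • E)) :=
      ((toMat d).toContinuousLinearMap : _ →L[ℝ] _).hasFDerivAt
    have := hc.comp_hasDerivAt 0 hexp
    exact this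
  have hdet := (detCM d).hasFDerivAt (toMat d (NormedSpace.exp ((0:ℝ) • E)))
  have hcomp := hdet.comp_hasDerivAt 0 hmat
  have hfun : (⇑(detCM d) ∘ fun t : ℝ => toMat d (NormedSpace.exp (t • E))) = detExp E :=
    funext fun t => (detExp_eq_detCM E t).symm
  rw [hfun] at hcomp
  have h0 : toMat d (NormedSpace.exp ((0:ℝ) • E))
      = Matrix.of.symm (1 : Matrix (Fin d) (Fin d) ℝ) := by
    rw [show (0:ℝ) • E = 0 from zero_smul ℝ E, NormedSpace.exp_zero, toMat_one]
  rw [h0] at hcomp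
  have heval : ((detCM d).linearDeriv (Matrix.of.symm (1 : Matrix (Fin d) (Fin d) ℝ)))
      (toMat d E) = LinearMap.trace ℝ (VS d) (E : VS d →ₗ[ℝ] VS d) := by
    rw [ContinuousMultilinearMap.linearDeriv_apply]
    have hterm : ∀ i : Fin d, (detCM d) (Function.update (Matrix.of.symm
          (1 : Matrix (Fin d) (Fin d) ℝ)) i (toMat d E i))
        = (toMat d E) i i := by
      intro i
      rw [show (detCM d) (Function.update (Matrix.of.symm (1 : Matrix (Fin d) (Fin d) ℝ)) i
            (toMat d E i))
          = ((1 : Matrix (Fin d) (Fin d) ℝ).updateRow i (toMat d E i)).det from rfl]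
      exact det_updateRow_one i _
    rw [Finset.sum_congr rfl fun i _ => hterm i]
    rw [LinearMap.trace_eq_matrix_trace ℝ (bV d)]
    simp only [Matrix.trace, Matrix.diag, toMat, LinearMap.coe_mk, AddHom.coe_mk]
    rfl
  rw [heval] at hcomp
  exact hcomp

lemma detExp_add {d : ℕ} (E : VS d →L[ℝ] VS d) (s t : ℝ) :
    detExp E (s + t) = detExp E s * detExp E t := by
  unfold detExp
  have hcomm : Commute (s • E) (t • E) := by
    show (s • E) * (t • E) = (t • E) * (s • E)
    ext x
    simp only [ContinuousLinearMap.mul_apply, ContinuousLinearMap.smul_apply,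
      _root_.map_smul, smul_comm s t]
  rw [show (s + t) • E = s • E + t • E from add_smul s t E,
    exp_add_CLM hcomm]
  have h : ((NormedSpace.exp (s • E) * NormedSpace.exp (t • E) : VS d →L[ℝ] VS d)
        : VS d →ₗ[ℝ] VS d)
      = ((NormedSpace.exp (s • E) : VS d →L[ℝ] VS d) : VS d →ₗ[ℝ] VS d)
        * ((NormedSpace.exp (t • E) : VS d →L[ℝ] VS d) : VS d →ₗ[ℝ] VS d) := rfl
  rw [h, map_mul]

lemma detExp_zero {d : ℕ} (E : VS d →L[ℝ] VS d) : detExp E 0 = 1 := by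
  unfold detExp
  rw [show (0:ℝ) • E = 0 from zero_smul ℝ E, NormedSpace.exp_zero, coe_one_eq_id]
  exact LinearMap.det_id

lemma detExp_ne_zero {d : ℕ} (E : VS d →L[ℝ] VS d) (t : ℝ) : detExp E t ≠ 0 := by
  intro h
  have h1 := detExp_add E t (-t)
  rw [add_neg_cancel, detExp_zero, h, zero_mul] at h1
  exact one_ne_zero h1

lemma detExp_pos {d : ℕ} (E : VS d →L[ℝ] VS d) (t : ℝ) : 0 < detExp E t := by
  have hsq : detExp E t = detExp E (t/2) * detExp E (t/2) := by
    rw [← detExp_add]; norm_num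
  rw [hsq]
  exact mul_self_pos.mpr (detExp_ne_zero E (t/2))

lemma detExp_continuous {d : ℕ} (E : VS d →L[ℝ] VS d) : Continuous (detExp E) := by
  have h1 : Continuous fun t : ℝ => (NormedSpace.exp (t • E) : VS d →L[ℝ] VS d) :=
    exp_continuous_CLM.comp (continuous_id.smul continuous_const)
  exact ContinuousLinearMap.continuous_det.comp h1

/-- the key formula: `det (exp (t • E)) = exp (t * tr E)` -/
theorem detExp_eq {d : ℕ} (E : VS d →L[ℝ] VS d) (t : ℝ) :
    detExp E t = Real.exp (t * LinearMap.trace ℝ (VS d) (E : VS d →ₗ[ℝ] VS d)) := by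
  set L : ℝ → ℝ := fun t => Real.log (detExp E t) with hL
  have hadd : ∀ s t : ℝ, L (s + t) = L s + L t := by
    intro s t
    simp only [hL]
    rw [detExp_add, Real.log_mul (detExp_ne_zero E s) (detExp_ne_zero E t)]
  have hcont : Continuous L :=
    continuous_iff_continuousAt.2 fun t =>
      (Real.continuousAt_log (detExp_ne_zero E t)).comp (detExp_continuous E).continuousAt
  set φ : ℝ →+ ℝ := AddMonoidHom.mk' L hadd with hφ
  have hlin : ∀ s : ℝ, L s = s * L 1 := by
    intro s
    have h1 : φ.toRealLinearMap hcont s = φ.toRealLinearMap hcont (s • (1:ℝ)) := by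
      norm_num
    rw [(φ.toRealLinearMap hcont).map_smul] at h1
    exact h1
  have hLder : HasDerivAt L (LinearMap.trace ℝ (VS d) (E : VS d →ₗ[ℝ] VS d)) 0 := by
    have h2 := (Real.hasDerivAt_log (detExp_ne_zero E 0)).comp 0 (detExp_hasDerivAt E)
    rw [detExp_zero, inv_one, one_mul] at h2
    exact h2
  have hLder2 : HasDerivAt L (L 1) 0 := by
    have h3 : HasDerivAt (fun s : ℝ => s * L 1) (L 1) 0 := by
      simpa using (hasDerivAt_id (0:ℝ)).mul_const (L 1)
    exact HasDerivAt.congr_of_eventuallyEq h3 (Filter.Eventually.of_forall fun s => hlin s)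
  have hL1 : L 1 = LinearMap.trace ℝ (VS d) (E : VS d →ₗ[ℝ] VS d) := hLder2.unique hLder
  have h4 := hlin t
  rw [hL1] at h4
  have hexp : detExp E t = Real.exp (L t) := (Real.exp_log (detExp_pos E t)).symm
  rw [hexp, h4]

end DetExp

section GrpLemmas

lemma Tgrp_comm_smul {d : ℕ} (E : VS d →L[ℝ] VS d) (a b : ℝ) : Commute (a • E) (b • E) := by
  show (a • E) * (b • E) = (b • E) * (a • E)
  ext x
  simp only [ContinuousLinearMap.mul_apply, ContinuousLinearMap.smul_apply,
    _root_.map_smul, smul_comm a b]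

lemma Tgrp_mul {d : ℕ} (E : VS d →L[ℝ] VS d) {r s : ℝ} (hr : 0 < r) (hs : 0 < s) :
    Tgrp E r * Tgrp E s = Tgrp E (r * s) := by
  unfold Tgrp
  rw [← exp_add_CLM (Tgrp_comm_smul E _ _),
    show Real.log r • E + Real.log s • E = (Real.log r + Real.log s) • E
      from (add_smul _ _ _).symm,
    ← Real.log_mul hr.ne' hs.ne']

lemma Tgrp_one {d : ℕ} (E : VS d →L[ℝ] VS d) : Tgrp E 1 = 1 := by
  unfold Tgrp
  rw [Real.log_one, show (0:ℝ) • E = 0 from zero_smul ℝ E, NormedSpace.exp_zero]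

lemma Tgrp_mul_apply {d : ℕ} (E : VS d →L[ℝ] VS d) {r s : ℝ} (hr : 0 < r) (hs : 0 < s)
    (x : VS d) : Tgrp E r (Tgrp E s x) = Tgrp E (r * s) x := by
  rw [← ContinuousLinearMap.mul_apply, Tgrp_mul E hr hs]

lemma Tgrp_inv_cancel {d : ℕ} (E : VS d →L[ℝ] VS d) {r : ℝ} (hr : 0 < r) (x : VS d) :
    Tgrp E r⁻¹ (Tgrp E r x) = x := by
  rw [Tgrp_mul_apply E (inv_pos.2 hr) hr, inv_mul_cancel₀ hr.ne', Tgrp_one]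
  rfl

lemma Tgrp_cancel_inv {d : ℕ} (E : VS d →L[ℝ] VS d) {r : ℝ} (hr : 0 < r) (x : VS d) :
    Tgrp E r (Tgrp E r⁻¹ x) = x := by
  rw [Tgrp_mul_apply E hr (inv_pos.2 hr), mul_inv_cancel₀ hr.ne', Tgrp_one]
  rfl

lemma Tgrp_det {d : ℕ} (E : VS d →L[ℝ] VS d) (r : ℝ) :
    LinearMap.det ((Tgrp E r : VS d →L[ℝ] VS d) : VS d →ₗ[ℝ] VS d)
      = Real.exp (Real.log r * LinearMap.trace ℝ (VS d) (E : VS d →ₗ[ℝ] VS d)) :=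
  detExp_eq E (Real.log r)

lemma P_zero {d : ℕ} {P : VS d → ℝ} {E : VS d →L[ℝ] VS d} (hE : IsExpOf P E) : P 0 = 0 := by
  have h := hE 2 (by norm_num) 0
  rw [map_zero] at h
  linarith

lemma P_pos {d : ℕ} {P : VS d → ℝ} (hP : IsPosHom P) {x : VS d} (hx : x ≠ 0) : 0 < P x := by
  rcases hP with ⟨-, hnn, hzero, -, -⟩
  rcases lt_or_eq_of_le (hnn x) with h | h
  · exact h
  · exact absurd (hzero x h.symm) hx

lemma ne_zero_of_P_pos {d : ℕ} {P : VS d → ℝ} {E : VS d →L[ℝ] VS d} (hE : IsExpOf P E)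
    {x : VS d} (hx : 0 < P x) : x ≠ 0 := by
  intro h
  rw [h, P_zero hE] at hx
  exact lt_irrefl 0 hx

lemma P_Phi {d : ℕ} {P : VS d → ℝ} {E : VS d →L[ℝ] VS d} (hE : IsExpOf P E)
    {x : VS d} (hx : 0 < P x) : P (Tgrp E (P x)⁻¹ x) = 1 := by
  rw [hE _ (inv_pos.2 hx), inv_mul_cancel₀ hx.ne']

/-- the key set identity : `Tilde (F ∩ S) = Φ⁻¹ F ∩ A` -/
lemma tilde_eq {d : ℕ} {P : VS d → ℝ} {E : VS d →L[ℝ] VS d} (hE : IsExpOf P E)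
    (F : Set (VS d)) :
    Tilde E (F ∩ {η | P η = 1})
      = (fun x => Tgrp E (P x)⁻¹ x) ⁻¹' F ∩ {x | P x ∈ Set.Ioo (0:ℝ) 1} := by
  ext x
  constructor
  · rintro ⟨r, ⟨hr0, hr1⟩, η, ⟨hηF, hηS⟩, rfl⟩
    have hPx : P (Tgrp E r η) = r := by
      rw [hE r hr0 η, Set.mem_setOf_eq.mp hηS, mul_one]
    constructor
    · show Tgrp E (P (Tgrp E r η))⁻¹ (Tgrp E r η) ∈ F
      rw [hPx, Tgrp_inv_cancel E hr0]
      exact hηF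
    · show P (Tgrp E r η) ∈ Set.Ioo (0:ℝ) 1
      rw [hPx]; exact ⟨hr0, hr1⟩
  · rintro ⟨hxF, hxA⟩
    rcases hxA with ⟨h0, h1⟩
    exact ⟨P x, ⟨h0, h1⟩, Tgrp E (P x)⁻¹ x, ⟨hxF, P_Phi hE h0⟩, Tgrp_cancel_inv E h0 x⟩

lemma continuousOn_Phi {d : ℕ} {P : VS d → ℝ} (hP : IsPosHom P) (E : VS d →L[ℝ] VS d) :
    ContinuousOn (fun x => Tgrp E (P x)⁻¹ x) {x : VS d | 0 < P x} := by
  intro x hx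
  have hxpos : 0 < P x := hx
  have hPx : P x ≠ 0 := ne_of_gt hxpos
  have hinv : ContinuousAt (fun y : VS d => (P y)⁻¹) x := (hP.1.continuousAt).inv₀ hPx
  have hlog : ContinuousAt (fun y : VS d => Real.log ((P y)⁻¹)) x :=
    ContinuousAt.comp (x := x) (g := Real.log) (Real.continuousAt_log (inv_ne_zero hPx)) hinv
  have h1 : ContinuousAt (fun y : VS d => Tgrp E (P y)⁻¹) x := by
    refine exp_continuous_CLM.continuousAt.comp ?_
    exact ContinuousAt.smul hlog continuousAt_const
  have h2 : ContinuousAt (fun y : VS d => Tgrp E (P y)⁻¹ y) x :=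
    isBoundedBilinearMap_apply.continuous.continuousAt.comp (h1.prodMk continuousAt_id)
  exact h2.continuousWithinAt

/-- joint continuity of `(s, x) ↦ Tgrp E s x` on `{s ≠ 0}` (first coordinate `x`) -/
lemma continuousOn_Tgrp_pair {d : ℕ} (E : VS d →L[ℝ] VS d) :
    ContinuousOn (fun p : VS d × ℝ => Tgrp E p.2 p.1) {p : VS d × ℝ | p.2 ≠ 0} := by
  intro p hp
  have h1 : ContinuousAt (fun q : VS d × ℝ => Tgrp E q.2) p := by
    refine exp_continuous_CLM.continuousAt.comp ?_
    have hp' : p.2 ≠ 0 := hp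
    exact ContinuousAt.smul
      (ContinuousAt.comp (x := p) (g := Real.log) (Real.continuousAt_log hp') continuousAt_snd)
      continuousAt_const
  exact (isBoundedBilinearMap_apply.continuous.continuousAt.comp
    (h1.prodMk continuousAt_fst)).continuousWithinAt

lemma trace_pos {d : ℕ} {P : VS d → ℝ} (hP : IsPosHom P) {E : VS d →L[ℝ] VS d}
    (hE : IsExpOf P E) {x₀ : VS d} (hx₀ : x₀ ≠ 0) :
    0 < LinearMap.trace ℝ (VS d) (E : VS d →ₗ[ℝ] VS d) := by
  haveI : Nontrivial (VS d) := nontrivial_of_ne x₀ 0 hx₀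
  haveI : NullSingletonClass (volume : Measure (VS d)) := inferInstance
  set τ := LinearMap.trace ℝ (VS d) (E : VS d →ₗ[ℝ] VS d) with hτdef
  by_contra hτ
  push_neg at hτ
  have hP0 : P 0 = 0 := P_zero hE
  have hopen : ∀ r : ℝ, IsOpen {x : VS d | P x < r} := fun r =>
    isOpen_lt hP.1 continuous_const
  have hv1pos : 0 < volume {x : VS d | P x < 1} :=
    (hopen 1).measure_pos volume ⟨0, by simp [hP0]⟩
  -- compactness of `{P ≤ 1}`
  have hev : ∀ᶠ x in Filter.cocompact (VS d), 2 ≤ P x :=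
    hP.2.2.2.2.eventually (Filter.eventually_ge_atTop 2)
  rw [Filter.eventually_iff, Filter.mem_cocompact] at hev
  obtain ⟨K, hK, hKsub⟩ := hev
  have hsub : {x : VS d | P x ≤ 1} ⊆ K := by
    intro x hx
    by_contra hxK
    have := hKsub hxK
    simp only [Set.mem_setOf_eq] at this hx
    linarith
  have hcpt : IsCompact {x : VS d | P x ≤ 1} :=
    hK.of_isClosed_subset (isClosed_le hP.1 continuous_const) hsub
  have hfin : volume {x : VS d | P x ≤ 1} ≠ ⊤ := hcpt.measure_lt_top.ne
  -- scaling law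
  have hsc : ∀ r : ℝ, 0 < r → volume {x : VS d | P x < r}
      = ENNReal.ofReal (Real.exp (Real.log r * τ)) * volume {x : VS d | P x < 1} := by
    intro r hr
    have him : {x : VS d | P x < r}
        = ⇑((Tgrp E r : VS d →L[ℝ] VS d) : VS d →ₗ[ℝ] VS d) '' {x : VS d | P x < 1} := by
      ext x
      simp only [Set.mem_image, Set.mem_setOf_eq]
      constructor
      · intro hx
        refine ⟨Tgrp E r⁻¹ x, ?_, ?_⟩
        · show P (Tgrp E r⁻¹ x) < 1
          rw [hE _ (inv_pos.2 hr) x]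
          calc r⁻¹ * P x < r⁻¹ * r := by
                exact mul_lt_mul_of_pos_left hx (inv_pos.2 hr)
            _ = 1 := inv_mul_cancel₀ hr.ne'
        · show Tgrp E r (Tgrp E r⁻¹ x) = x
          exact Tgrp_cancel_inv E hr x
      · rintro ⟨y, hy, rfl⟩
        show P (Tgrp E r y) < r
        rw [hE r hr y]
        calc r * P y < r * 1 := mul_lt_mul_of_pos_left hy hr
          _ = r := mul_one r
    rw [him, MeasureTheory.Measure.addHaar_image_linearMap, Tgrp_det,
      abs_of_pos (Real.exp_pos _)]
  -- each `vol {P < 1/(n+1)}` is at least `vol {P < 1}`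
  have hlow : ∀ n : ℕ, volume {x : VS d | P x < 1} ≤ volume {x : VS d | P x < 1/(n+1)} := by
    intro n
    have hrpos : (0:ℝ) < 1/(n+1) := by positivity
    rw [hsc _ hrpos]
    have hlog : Real.log (1/(n+1)) ≤ 0 :=
      Real.log_nonpos (le_of_lt hrpos) (by
        rw [div_le_one (by positivity)]
        norm_num)
    have hmulnn : 0 ≤ Real.log (1/(n+1)) * τ := by nlinarith
    have hexp1 : (1:ℝ) ≤ Real.exp (Real.log (1/(n+1)) * τ) := Real.one_le_exp hmulnn
    calc volume {x : VS d | P x < 1}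
        = 1 * volume {x : VS d | P x < 1} := (one_mul _).symm
      _ ≤ ENNReal.ofReal (Real.exp (Real.log (1/(n+1)) * τ)) * volume {x : VS d | P x < 1} := by
          refine mul_le_mul_left ?_ _
          rw [show (1 : ENNReal) = ENNReal.ofReal 1 from (ENNReal.ofReal_one).symm]
          exact ENNReal.ofReal_le_ofReal hexp1
  -- the intersection is `{0}`
  have hiInter : ⋂ n : ℕ, {x : VS d | P x < 1/(n+1)} = {(0 : VS d)} := by
    ext x
    simp only [Set.mem_iInter, Set.mem_setOf_eq, Set.mem_singleton_iff]
    constructor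
    · intro hx
      have hle : P x ≤ 0 :=
        ge_of_tendsto tendsto_one_div_add_atTop_nhds_zero_nat
          (Filter.Eventually.of_forall fun n => (hx n).le)
      rcases hP with ⟨-, hnn, hzero, -, -⟩
      exact hzero x (le_antisymm hle (hnn x))
    · intro hx
      rw [hx, hP0]
      intro n
      positivity
  have htend := MeasureTheory.tendsto_measure_iInter_atTop
    (μ := (volume : Measure (VS d))) (s := fun n : ℕ => {x : VS d | P x < 1/(n+1)})
    (fun n => ((hopen _).measurableSet).nullMeasurableSet)
    (fun m n hmn => by
      intro x hx
      simp only [Set.mem_setOf_eq] at hx ⊢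
      refine lt_of_lt_of_le hx (one_div_le_one_div_of_le (by positivity) ?_)
      have : (m:ℝ) ≤ (n:ℝ) := Nat.cast_le.2 hmn
      linarith)
    ⟨0, by
      refine ne_top_of_le_ne_top hfin (measure_mono ?_)
      intro x hx
      simp only [Set.mem_setOf_eq] at hx ⊢
      norm_num at hx
      linarith⟩
  rw [hiInter] at htend
  have hlim : volume ({(0:VS d)} : Set (VS d)) = 0 := measure_singleton 0
  rw [hlim] at htend
  have : volume {x : VS d | P x < 1} ≤ 0 :=
    ge_of_tendsto htend (Filter.Eventually.of_forall fun n => hlow n)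
  exact absurd (le_antisymm this (by simp)) hv1pos.ne'

end GrpLemmas


section KeyAESM
set_option maxHeartbeats 2000000
set_option synthInstance.maxHeartbeats 400000

/-- If `g ∘ Φ` is a.e. measurable on `A = {0 < P < 1}`, then `g` is a.e. strongly
measurable for the surface measure `σ`. -/
lemma key_aesm {d : ℕ} {P : VS d → ℝ} (hP : IsPosHom P) {E : VS d →L[ℝ] VS d}
    (hE : IsExpOf P E) (σ : Measure (VS d)) (c : ENNReal)
    (hσ : ∀ F : Set (VS d), MeasurableSet F →
      σ F = c * volume (Tilde E (F ∩ {η | P η = 1})))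
    (g : VS d → ℂ)
    (hgm : AEMeasurable (fun x => g (Tgrp E (P x)⁻¹ x))
      (volume.restrict {x | P x ∈ Set.Ioo (0:ℝ) 1})) :
    AEStronglyMeasurable g σ := by
  classical
  set A : Set (VS d) := {x | P x ∈ Set.Ioo (0:ℝ) 1} with hAdef
  have hAmeas : MeasurableSet A := hP.1.measurable measurableSet_Ioo
  have hSmeas : MeasurableSet {η : VS d | P η = 1} :=
    hP.1.measurable (measurableSet_singleton 1)
  set h : VS d → ℂ := hgm.mk _ with hhdef
  have hmeas : Measurable h := hgm.measurable_mk
  have hae : (fun x => g (Tgrp E (P x)⁻¹ x)) =ᵐ[volume.restrict A] h := hgm.ae_eq_mk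
  have hnull : volume.restrict A {x | g (Tgrp E (P x)⁻¹ x) ≠ h x} = 0 := by
    exact hae
  set N : Set (VS d) :=
    toMeasurable (volume.restrict A) {x | g (Tgrp E (P x)⁻¹ x) ≠ h x} with hNdef
  have hNmeas : MeasurableSet N := measurableSet_toMeasurable _ _
  have hNnull : volume.restrict A N = 0 := by
    rw [hNdef, measure_toMeasurable]
    exact hnull
  set E2 : Set (VS d) := N ∩ A with hE2def
  have hE2meas : MeasurableSet E2 := hNmeas.inter hAmeas
  have hE2null : volume E2 = 0 := by
    rw [hE2def, ← Measure.restrict_apply hNmeas]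
    exact hNnull
  have hagree : ∀ x ∈ A, x ∉ E2 → g (Tgrp E (P x)⁻¹ x) = h x := by
    intro x hxA hxE
    by_contra hne
    exact hxE ⟨subset_toMeasurable _ _ hne, hxA⟩
  -- step 1 : almost every point has a null set of "bad scales"
  set W₂ : Set (VS d × ℝ) := {p | 0 < p.2 ∧ Tgrp E p.2 p.1 ∈ E2} with hW₂def
  have hUopen : IsOpen {p : VS d × ℝ | 0 < p.2} := isOpen_lt continuous_const continuous_snd
  have hcontW₂ : ContinuousOn (fun p : VS d × ℝ => Tgrp E p.2 p.1) {p : VS d × ℝ | 0 < p.2} :=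
    (continuousOn_Tgrp_pair E).mono fun p hp => ne_of_gt hp
  have hW₂meas : MeasurableSet W₂ := by
    have hrestr : Continuous ({p : VS d × ℝ | 0 < p.2}.restrict
        (fun p : VS d × ℝ => Tgrp E p.2 p.1)) :=
      continuousOn_iff_continuous_restrict.1 hcontW₂
    have h1 : W₂ = Subtype.val '' (({p : VS d × ℝ | 0 < p.2}.restrict
        (fun p : VS d × ℝ => Tgrp E p.2 p.1)) ⁻¹' E2) := by
      ext p
      constructor
      · rintro ⟨hp2, hpmem⟩
        exact ⟨⟨p, hp2⟩, hpmem, rfl⟩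
      · rintro ⟨⟨q, hq⟩, hqmem, rfl⟩
        exact ⟨hq, hqmem⟩
    rw [h1]
    exact (MeasurableEmbedding.subtype_coe hUopen.measurableSet).measurableSet_image.2
      (hrestr.measurable hE2meas)
  have hW₂null : ((volume : Measure (VS d)).prod (volume : Measure ℝ)) W₂ = 0 := by
    rw [Measure.prod_apply_symm hW₂meas]
    have hslice : ∀ s : ℝ, (volume : Measure (VS d)) ((fun x : VS d => (x, s)) ⁻¹' W₂) = 0 := by
      intro s
      by_cases hs : 0 < s
      · have hdet : LinearMap.det ((Tgrp E s : VS d →L[ℝ] VS d) : VS d →ₗ[ℝ] VS d) ≠ 0 := by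
          rw [Tgrp_det]
          exact (Real.exp_pos _).ne'
        have hset : ((fun x : VS d => (x, s)) ⁻¹' W₂)
            = ⇑((Tgrp E s : VS d →L[ℝ] VS d) : VS d →ₗ[ℝ] VS d) ⁻¹' E2 := by
          ext x
          simp only [hW₂def, Set.mem_preimage, Set.mem_setOf_eq]
          exact ⟨fun hx => hx.2, fun hx => ⟨hs, hx⟩⟩
        rw [hset, Measure.addHaar_preimage_linearMap volume hdet E2, hE2null, mul_zero]
      · have hset : ((fun x : VS d => (x, s)) ⁻¹' W₂) = ∅ := by
          ext x
          simp only [hW₂def, Set.mem_preimage, Set.mem_setOf_eq, Set.mem_empty_iff_false,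
            iff_false]
          exact fun hx => hs hx.1
        rw [hset, measure_empty]
    rw [lintegral_congr hslice, lintegral_zero]
  have hrays : ∀ᵐ x ∂(volume : Measure (VS d)),
      (volume : Measure ℝ) (Prod.mk x ⁻¹' W₂) = 0 := by
    have := (Measure.measure_prod_null hW₂meas).1 hW₂null
    exact this.mono fun x hx => hx
  -- step 2 : find a good scale `t`
  set W' : Set (ℝ × VS d) :=
    {p | p.1 ∈ Set.Ioo (0:ℝ) 1 ∧ p.2 ∈ A ∧ Tgrp E p.1 (Tgrp E (P p.2)⁻¹ p.2) ∈ E2}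
    with hW'def
  have hU'open : IsOpen {p : ℝ × VS d | 0 < p.1 ∧ 0 < P p.2} := by
    refine IsOpen.inter (isOpen_lt continuous_const continuous_fst) ?_
    exact isOpen_lt continuous_const (hP.1.comp continuous_snd)
  have hcontW' : ContinuousOn (fun p : ℝ × VS d => Tgrp E p.1 (Tgrp E (P p.2)⁻¹ p.2))
      {p : ℝ × VS d | 0 < p.1 ∧ 0 < P p.2} := by
    intro p hp
    obtain ⟨hp1, hp2⟩ := hp
    have hinv : ContinuousAt (fun q : ℝ × VS d => (P q.2)⁻¹) p :=
      ContinuousAt.comp (x := p) (g := fun y : VS d => (P y)⁻¹)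
        ((hP.1.continuousAt (x := p.2)).inv₀ (ne_of_gt hp2)) continuousAt_snd
    have hlog2 : ContinuousAt (fun q : ℝ × VS d => Real.log ((P q.2)⁻¹)) p :=
      ContinuousAt.comp (x := p) (g := Real.log)
        (Real.continuousAt_log (inv_ne_zero (ne_of_gt hp2))) hinv
    have hM2 : ContinuousAt (fun q : ℝ × VS d => Tgrp E (P q.2)⁻¹) p :=
      exp_continuous_CLM.continuousAt.comp (hlog2.smul continuousAt_const)
    have hin : ContinuousAt (fun q : ℝ × VS d => Tgrp E (P q.2)⁻¹ q.2) p :=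
      isBoundedBilinearMap_apply.continuous.continuousAt.comp (hM2.prodMk continuousAt_snd)
    have hlog1 : ContinuousAt (fun q : ℝ × VS d => Real.log q.1) p :=
      ContinuousAt.comp (x := p) (g := Real.log) (Real.continuousAt_log (ne_of_gt hp1))
        continuousAt_fst
    have hM1 : ContinuousAt (fun q : ℝ × VS d => Tgrp E q.1) p :=
      exp_continuous_CLM.continuousAt.comp (hlog1.smul continuousAt_const)
    have hout : ContinuousAt (fun q : ℝ × VS d => Tgrp E q.1 (Tgrp E (P q.2)⁻¹ q.2)) p :=
      isBoundedBilinearMap_apply.continuous.continuousAt.comp (hM1.prodMk hin)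
    exact hout.continuousWithinAt
  have hW'meas : MeasurableSet W' := by
    have hBmeas : MeasurableSet ((Set.Ioo (0:ℝ) 1) ×ˢ A) := measurableSet_Ioo.prod hAmeas
    have hrestr : Continuous ({p : ℝ × VS d | 0 < p.1 ∧ 0 < P p.2}.restrict
        (fun p : ℝ × VS d => Tgrp E p.1 (Tgrp E (P p.2)⁻¹ p.2))) :=
      continuousOn_iff_continuous_restrict.1 hcontW'
    have h1 : W' = ((Set.Ioo (0:ℝ) 1) ×ˢ A) ∩ (Subtype.val ''
        (({p : ℝ × VS d | 0 < p.1 ∧ 0 < P p.2}.restrict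
          (fun p : ℝ × VS d => Tgrp E p.1 (Tgrp E (P p.2)⁻¹ p.2))) ⁻¹' E2)) := by
      ext p
      constructor
      · rintro ⟨hp1, hp2, hp3⟩
        exact ⟨⟨hp1, hp2⟩, ⟨⟨p, ⟨hp1.1, hp2.1⟩⟩, hp3, rfl⟩⟩
      · rintro ⟨⟨hp1, hp2⟩, ⟨⟨q, hq⟩, hqmem, rfl⟩⟩
        exact ⟨hp1, hp2, hqmem⟩
    rw [h1]
    refine hBmeas.inter ?_
    exact (MeasurableEmbedding.subtype_coe hU'open.measurableSet).measurableSet_image.2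
      (hrestr.measurable hE2meas)
  have hW'null : ((volume : Measure ℝ).prod (volume : Measure (VS d))) W' = 0 := by
    rw [Measure.prod_apply_symm hW'meas]
    have haezero : (fun x : VS d => (volume : Measure ℝ) ((fun t : ℝ => (t, x)) ⁻¹' W'))
        =ᵐ[volume] 0 := by
      filter_upwards [hrays] with x hx
      show (volume : Measure ℝ) ((fun t : ℝ => (t, x)) ⁻¹' W') = 0
      by_cases hxA : x ∈ A
      · have hPx : 0 < P x := hxA.1
        have hdet1 : LinearMap.det ((P x)⁻¹ • (LinearMap.id : ℝ →ₗ[ℝ] ℝ)) ≠ 0 := by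
          rw [LinearMap.det_smul, LinearMap.det_id]
          simp only [Module.finrank_self, pow_one, mul_one]
          exact inv_ne_zero hPx.ne'
        have hsub : ((fun t : ℝ => (t, x)) ⁻¹' W')
            ⊆ ⇑((P x)⁻¹ • (LinearMap.id : ℝ →ₗ[ℝ] ℝ)) ⁻¹' (Prod.mk x ⁻¹' W₂) := by
          rintro t ⟨⟨ht0, ht1⟩, -, hmem⟩
          show (x, ((P x)⁻¹ • (LinearMap.id : ℝ →ₗ[ℝ] ℝ)) t) ∈ W₂
          have happ : ((P x)⁻¹ • (LinearMap.id : ℝ →ₗ[ℝ] ℝ)) t = t * (P x)⁻¹ := by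
            simp [smul_eq_mul, mul_comm]
          rw [happ]
          refine ⟨by positivity, ?_⟩
          rw [← Tgrp_mul_apply E ht0 (inv_pos.2 hPx) x]
          exact hmem
        refine measure_mono_null hsub ?_
        rw [Measure.addHaar_preimage_linearMap volume hdet1, hx, mul_zero]
      · have hempty : ((fun t : ℝ => (t, x)) ⁻¹' W') = ∅ := by
          ext t
          simp only [Set.mem_preimage, Set.mem_empty_iff_false, iff_false]
          rintro ⟨-, hxA', -⟩
          exact hxA hxA'
        rw [hempty, measure_empty]
    rw [lintegral_congr_ae haezero]
    simp
  have htexists : ∃ t : ℝ, t ∈ Set.Ioo (0:ℝ) 1 ∧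
      (volume : Measure (VS d)) {x | x ∈ A ∧ Tgrp E t (Tgrp E (P x)⁻¹ x) ∈ E2} = 0 := by
    have hae2 := (Measure.measure_prod_null hW'meas).1 hW'null
    have h1 : ∀ᵐ t ∂((volume : Measure ℝ).restrict (Set.Ioo (0:ℝ) 1)),
        (volume : Measure (VS d)) (Prod.mk t ⁻¹' W') = 0 := by
      refine Filter.Eventually.filter_mono (ae_mono Measure.restrict_le_self) ?_
      exact hae2.mono fun t ht => ht
    have h2 : ∀ᵐ t ∂((volume : Measure ℝ).restrict (Set.Ioo (0:ℝ) 1)),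
        t ∈ Set.Ioo (0:ℝ) 1 := ae_restrict_mem measurableSet_Ioo
    haveI : (ae ((volume : Measure ℝ).restrict (Set.Ioo (0:ℝ) 1))).NeBot := by
      refine ae_neBot.2 ?_
      intro hzero
      have := congrArg (fun μ : Measure ℝ => μ (Set.Ioo (0:ℝ) 1)) hzero
      simp [Measure.restrict_apply, measurableSet_Ioo, Real.volume_Ioo] at this
    obtain ⟨t, htnull, htIoo⟩ := (h1.and h2).exists
    refine ⟨t, htIoo, ?_⟩
    have hseteq : (Prod.mk t ⁻¹' W')
        = {x | x ∈ A ∧ Tgrp E t (Tgrp E (P x)⁻¹ x) ∈ E2} := by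
      ext x
      simp only [Set.mem_preimage, hW'def, Set.mem_setOf_eq]
      exact ⟨fun hx => ⟨hx.2.1, hx.2.2⟩, fun hx => ⟨htIoo, hx.1, hx.2⟩⟩
    rw [← hseteq]
    exact htnull
  obtain ⟨t, htIoo, htnull⟩ := htexists
  have ht0 : 0 < t := htIoo.1
  -- the two σ-null bad sets
  have hσS : σ {η : VS d | P η = 1}ᶜ = 0 := by
    rw [hσ _ hSmeas.compl]
    have h1 : {η : VS d | P η = 1}ᶜ ∩ {η : VS d | P η = 1} = ∅ := compl_inter_self _
    rw [h1]
    have h2 : Tilde E (∅ : Set (VS d)) = ∅ := by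
      ext x
      simp [Tilde]
    rw [h2, measure_empty, mul_zero]
  have hσB : σ (⇑(Tgrp E t) ⁻¹' E2) = 0 := by
    have hmeasB : MeasurableSet (⇑(Tgrp E t) ⁻¹' E2) :=
      hE2meas.preimage (Tgrp E t).continuous.measurable
    rw [hσ _ hmeasB, tilde_eq hE]
    have hset : (fun x => Tgrp E (P x)⁻¹ x) ⁻¹' (⇑(Tgrp E t) ⁻¹' E2) ∩ A
        = {x | x ∈ A ∧ Tgrp E t (Tgrp E (P x)⁻¹ x) ∈ E2} := by
      ext x
      simp only [Set.mem_inter_iff, Set.mem_preimage, Set.mem_setOf_eq]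
      exact ⟨fun hx => ⟨hx.2, hx.1⟩, fun hx => ⟨hx.2, hx.1⟩⟩
    rw [hset, htnull, mul_zero]
  -- conclude
  refine ⟨fun η => h (Tgrp E t η),
    (hmeas.comp (Tgrp E t).continuous.measurable).stronglyMeasurable, ?_⟩
  have hsubset : {η : VS d | g η ≠ h (Tgrp E t η)}
      ⊆ {η : VS d | P η = 1}ᶜ ∪ (⇑(Tgrp E t) ⁻¹' E2) := by
    intro η hη
    by_contra hcon
    rw [Set.mem_union] at hcon
    push_neg at hcon
    obtain ⟨hc1, hc2⟩ := hcon
    have hηS : P η = 1 := not_not.1 hc1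
    have hηB : Tgrp E t η ∉ E2 := hc2
    have hy : P (Tgrp E t η) = t := by rw [hE t ht0 η, hηS, mul_one]
    have hyA : Tgrp E t η ∈ A := by
      show P (Tgrp E t η) ∈ Set.Ioo (0:ℝ) 1
      rw [hy]
      exact htIoo
    have heq := hagree _ hyA hηB
    have hΦy : Tgrp E (P (Tgrp E t η))⁻¹ (Tgrp E t η) = η := by
      rw [hy]
      exact Tgrp_inv_cancel E ht0 η
    rw [hΦy] at heq
    exact hη heq
  have : σ {η : VS d | g η ≠ h (Tgrp E t η)} = 0 :=
    measure_mono_null hsubset (measure_union_null hσS hσB)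
  exact ae_iff.2 this

end KeyAESM


open scoped Classical

/-- Integration on `S`: with `f(x) = μ_P · χ_{(0,1)}(P(x)) · g(P(x)^{-E} x)` (and `f(0)=0`),
`g` is `σ_P`-integrable iff `f` is Lebesgue integrable, and then `∫ f dx = ∫_S g dσ_P`. -/
theorem integrate_on_S {d : ℕ}
    (P : EuclideanSpace ℝ (Fin d) → ℝ) (hP : IsPosHom P)
    (E : EuclideanSpace ℝ (Fin d) →L[ℝ] EuclideanSpace ℝ (Fin d)) (hE : IsExpOf P E)
    (σ : Measure (EuclideanSpace ℝ (Fin d)))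
    (hσ : ∀ F : Set (EuclideanSpace ℝ (Fin d)), MeasurableSet F →
      σ F = ENNReal.ofReal (LinearMap.trace ℝ (EuclideanSpace ℝ (Fin d))
          (E : EuclideanSpace ℝ (Fin d) →ₗ[ℝ] EuclideanSpace ℝ (Fin d))) *
        volume (Tilde E (F ∩ {η | P η = 1})))
    (g : EuclideanSpace ℝ (Fin d) → ℂ)
    (f : EuclideanSpace ℝ (Fin d) → ℂ)
    (hf : ∀ x : EuclideanSpace ℝ (Fin d), f x =
      if x = 0 then 0
      else if P x ∈ Set.Ioo (0:ℝ) 1 then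
        ((LinearMap.trace ℝ (EuclideanSpace ℝ (Fin d))
          (E : EuclideanSpace ℝ (Fin d) →ₗ[ℝ] EuclideanSpace ℝ (Fin d)) : ℝ) : ℂ) *
          g (Tgrp E (P x)⁻¹ x)
      else 0) :
    (Integrable g σ ↔ Integrable f volume) ∧
    (Integrable g σ → ∫ x, f x = ∫ η, g η ∂σ) := by
  classical
  set τ : ℝ := LinearMap.trace ℝ (EuclideanSpace ℝ (Fin d))
    (E : EuclideanSpace ℝ (Fin d) →ₗ[ℝ] EuclideanSpace ℝ (Fin d)) with hτdef
  by_cases hA : {x : EuclideanSpace ℝ (Fin d) | P x ∈ Set.Ioo (0:ℝ) 1} = ∅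
  · -- degenerate case : `A` is empty, `σ = 0` and `f = 0`
    have hTsub : ∀ F : Set (VS d), Tilde E (F ∩ {η | P η = 1}) = ∅ := by
      intro F
      rw [tilde_eq hE F, hA, Set.inter_empty]
    have hσ0 : σ = 0 := by
      refine Measure.ext fun F hF => ?_
      rw [hσ F hF, hTsub, measure_empty, mul_zero]
      simp
    have hf0 : ∀ x, f x = 0 := by
      intro x
      rw [hf x]
      by_cases hx0 : x = 0
      · rw [if_pos hx0]
      · have hni : ¬ (P x ∈ Set.Ioo (0:ℝ) 1) := fun hm =>
          Set.eq_empty_iff_forall_notMem.1 hA x hm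
        rw [if_neg hx0, if_neg hni]
    have hfeq : f = fun _ => 0 := funext hf0
    refine ⟨⟨fun _ => ?_, fun _ => ?_⟩, fun _ => ?_⟩
    · rw [hfeq]
      exact integrable_zero _ _ _
    · rw [hσ0]
      exact integrable_zero_measure
    · rw [hσ0, integral_zero_measure, hfeq, integral_zero]
  · -- main case
    obtain ⟨x₁, hx₁⟩ := Set.nonempty_iff_ne_empty.2 hA
    have hx₁ne : x₁ ≠ 0 := ne_zero_of_P_pos hE hx₁.1
    have hτpos : 0 < τ := by
      rw [hτdef]
      exact trace_pos hP hE hx₁ne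
    set A : Set (VS d) := {x : VS d | P x ∈ Set.Ioo (0:ℝ) 1} with hAdef
    have hAmeas : MeasurableSet A := hP.1.measurable measurableSet_Ioo
    set c : ENNReal := ENNReal.ofReal τ with hcdef
    have hc0 : c ≠ 0 := by
      rw [hcdef]
      exact (ENNReal.ofReal_pos.mpr hτpos).ne'
    have hctop : c ≠ ⊤ := ENNReal.ofReal_ne_top
    set ν : Measure (VS d) := c • volume.restrict A with hνdef
    have hΦcontA : ContinuousOn (fun x => Tgrp E (P x)⁻¹ x) A :=
      (continuousOn_Phi hP E).mono fun x hx => hx.1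
    have hΦaeR : AEMeasurable (fun x => Tgrp E (P x)⁻¹ x) (volume.restrict A) :=
      hΦcontA.aemeasurable hAmeas
    have hΦaeν : AEMeasurable (fun x => Tgrp E (P x)⁻¹ x) ν := by
      rw [hνdef]
      exact (aemeasurable_smul_measure_iff hc0).2 hΦaeR
    have hσmap : σ = Measure.map (fun x => Tgrp E (P x)⁻¹ x) ν := by
      refine Measure.ext fun F hF => ?_
      rw [Measure.map_apply_of_aemeasurable hΦaeν hF, hσ F hF, tilde_eq hE F, hνdef,
        Measure.smul_apply, Measure.restrict_apply' hAmeas, smul_eq_mul]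
    have hfind : f = A.indicator (fun x => (τ : ℂ) * g (Tgrp E (P x)⁻¹ x)) := by
      funext x
      by_cases hmem : P x ∈ Set.Ioo (0:ℝ) 1
      · have hx0 : x ≠ 0 := ne_zero_of_P_pos hE hmem.1
        rw [hf x, if_neg hx0, if_pos hmem, Set.indicator_of_mem (show x ∈ A from hmem)]
      · rw [Set.indicator_of_notMem (show x ∉ A from hmem), hf x]
        by_cases hx0 : x = 0
        · rw [if_pos hx0]
        · rw [if_neg hx0, if_neg hmem]
    have hτC : (τ : ℂ) ≠ 0 := by exact_mod_cast hτpos.ne'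
    have hfwd : Integrable g σ → Integrable f volume := by
      intro hg
      have hg' : Integrable g (Measure.map (fun x => Tgrp E (P x)⁻¹ x) ν) := hσmap ▸ hg
      have hcomp : Integrable (g ∘ fun x => Tgrp E (P x)⁻¹ x) ν :=
        (integrable_map_measure hg'.aestronglyMeasurable hΦaeν).1 hg'
      rw [hνdef] at hcomp
      have hre : Integrable (fun x => g (Tgrp E (P x)⁻¹ x)) (volume.restrict A) :=
        (integrable_smul_measure hc0 hctop).1 hcomp
      rw [hfind]
      exact (integrable_indicator_iff hAmeas).2 (hre.const_mul _)
    have hbwd : Integrable f volume → Integrable g σ := by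
      intro hfi
      rw [hfind] at hfi
      have hion : Integrable (fun x => (τ:ℂ) * g (Tgrp E (P x)⁻¹ x)) (volume.restrict A) :=
        (integrable_indicator_iff hAmeas).1 hfi
      have hre : Integrable (fun x => g (Tgrp E (P x)⁻¹ x)) (volume.restrict A) := by
        have h2 := hion.const_mul ((τ:ℂ)⁻¹)
        have h3 : (fun x => (τ:ℂ)⁻¹ * ((τ:ℂ) * g (Tgrp E (P x)⁻¹ x)))
            = fun x => g (Tgrp E (P x)⁻¹ x) := by
          funext x
          rw [← mul_assoc, inv_mul_cancel₀ hτC, one_mul]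
        rwa [h3] at h2
      have hgm : AEStronglyMeasurable g σ :=
        key_aesm hP hE σ c (fun F hF => hσ F hF) g hre.aemeasurable
      rw [hσmap]
      refine (integrable_map_measure (hσmap ▸ hgm) hΦaeν).2 ?_
      rw [hνdef]
      exact (integrable_smul_measure hc0 hctop).2 hre
    refine ⟨⟨hfwd ∘ id ∘ id, hbwd⟩, ?_⟩
    intro hg
    have hgm : AEStronglyMeasurable g (Measure.map (fun x => Tgrp E (P x)⁻¹ x) ν) :=
      hσmap ▸ hg.aestronglyMeasurable
    have hint : ∫ η, g η ∂σ = ∫ x, g (Tgrp E (P x)⁻¹ x) ∂ν := by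
      rw [hσmap]
      exact integral_map hΦaeν hgm
    have hν' : ∫ x, g (Tgrp E (P x)⁻¹ x) ∂ν
        = τ • ∫ x in A, g (Tgrp E (P x)⁻¹ x) ∂volume := by
      rw [hνdef, integral_smul_measure, hcdef, ENNReal.toReal_ofReal hτpos.le]
    have hfint : ∫ x, f x = (τ:ℂ) * ∫ x in A, g (Tgrp E (P x)⁻¹ x) ∂volume := by
      rw [hfind, integral_indicator hAmeas, MeasureTheory.integral_const_mul]
    rw [hfint, hint, hν', Complex.real_smul]
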